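/- Let (T,𝖳,μ) be a σ-finite measure space, (X,d) a metric space, φ : X × X → [0,∞) a Carathéodory distance, and h : T × X → [0,∞] a Carathéodory function; set F(z) := ∫ h(t,z) dμ(t) and assume zer F := {z ∈ X : F(z) = 0} is nonempty and closed. Let τ, σ : [0,∞) → [0,∞) be nondecreasing with τ(0) = σ(0) = 0 and τ(ε), σ(ε) > 0 for all ε > 0. If μ({t ∈ T : h(t,x) ≥ τ(dist^φ_{zer F}(x))}) ≥ σ(dist^φ_{zer F}(x)) for all x ∈ X, then the function ε ↦ σ(ε)·τ(ε) is a modulus of φ-regularity for F, i.e. for every ε > 0 and every x ∈ X, F(x) < σ(ε)τ(ε) implies dist^φ_{zer F}(x) < ε. -/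

import Mathlib

open MeasureTheory Set ENNReal

/-- `dist^φ_S(x) := inf_{s ∈ S} φ(s, x)`. -/
noncomputable def distPhi {X : Type*} (φ : X → X → ℝ) (S : Set X) (x : X) : ℝ :=
  ⨅ s : S, φ s x

/-- Let `h : T × X → [0,∞]` be a Carathéodory function over a σ-finite
measure space, `F(z) := ∫ h(t,z) dμ(t)` with `zer F` nonempty and closed, and `τ, σ`
nondecreasing with `τ(0) = σ(0) = 0`, positive on `(0,∞)`. If
`μ({t : h(t,x) ≥ τ(dist^φ_{zer F}(x))}) ≥ σ(dist^φ_{zer F}(x))` for all `x`, then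
`ε ↦ σ(ε)·τ(ε)` is a modulus of `φ`-regularity for `F`. -/
theorem stmt_9 {T : Type*} [MeasurableSpace T] (μ : Measure T) [SigmaFinite μ]
    {X : Type*} [MetricSpace X] [MeasurableSpace X] [BorelSpace X]
    (φ : X → X → ℝ) (hφ_nonneg : ∀ x y : X, 0 ≤ φ x y)
    (hφ_cont : ∀ y : X, Continuous (fun x => φ x y))
    (hφ_meas : ∀ x : X, Measurable (fun y => φ x y))
    (h : T → X → ℝ≥0∞)
    (hh_meas : ∀ x : X, Measurable (fun t => h t x))
    (hh_cont : ∀ t : T, Continuous (h t))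
    (F : X → ℝ≥0∞) (hFdef : ∀ z : X, F z = ∫⁻ t, h t z ∂μ)
    (hzer_ne : {z : X | F z = 0}.Nonempty) (hzer_closed : IsClosed {z : X | F z = 0})
    (τ σ : ℝ → ℝ)
    (hτ_mono : MonotoneOn τ (Set.Ici 0)) (hσ_mono : MonotoneOn σ (Set.Ici 0))
    (hτ_zero : τ 0 = 0) (hσ_zero : σ 0 = 0)
    (hτ_pos : ∀ ε > (0 : ℝ), 0 < τ ε) (hσ_pos : ∀ ε > (0 : ℝ), 0 < σ ε)
    (hmain : ∀ x : X,
      ENNReal.ofReal (σ (distPhi φ {z : X | F z = 0} x)) ≤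
        μ {t : T | ENNReal.ofReal (τ (distPhi φ {z : X | F z = 0} x)) ≤ h t x}) :
    ∀ ε > (0 : ℝ), ∀ x : X,
      F x < ENNReal.ofReal (σ ε * τ ε) → distPhi φ {z : X | F z = 0} x < ε := by
  intro ε hε x hFx
  by_contra hcon
  push_neg at hcon
  set d := distPhi φ {z : X | F z = 0} x with hd
  have hd0 : 0 ≤ d := by
    have : ∀ s : {z : X | F z = 0}, 0 ≤ φ s x := fun s => hφ_nonneg s x
    exact Real.iInf_nonneg this
  have hεd : ε ≤ d := hcon
  have hτle : τ ε ≤ τ d := hτ_mono (le_of_lt hε) hd0 hεd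
  have hσle : σ ε ≤ σ d := hσ_mono (le_of_lt hε) hd0 hεd
  have key : ENNReal.ofReal (τ d) * μ {t : T | ENNReal.ofReal (τ d) ≤ h t x}
      ≤ ∫⁻ t, h t x ∂μ :=
    mul_meas_ge_le_lintegral₀ (hh_meas x).aemeasurable _
  have h1 : ENNReal.ofReal (σ ε * τ ε) ≤ F x := by
    rw [hFdef]
    calc ENNReal.ofReal (σ ε * τ ε)
        = ENNReal.ofReal (τ ε) * ENNReal.ofReal (σ ε) := by
          rw [← ENNReal.ofReal_mul (le_of_lt (hτ_pos ε hε)), mul_comm]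
      _ ≤ ENNReal.ofReal (τ d) * ENNReal.ofReal (σ d) :=
          mul_le_mul (ENNReal.ofReal_le_ofReal hτle) (ENNReal.ofReal_le_ofReal hσle)
            zero_le zero_le
      _ ≤ ENNReal.ofReal (τ d) * μ {t : T | ENNReal.ofReal (τ d) ≤ h t x} :=
          by gcongr; exact hmain x
      _ ≤ ∫⁻ t, h t x ∂μ := key
  exact absurd hFx (not_lt.2 h1)
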